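/- For the comprehensive prominence doctrine with initial values v(t_x) = v(¬t_x) = 0 for all x ∈ I, an option x ∈ I is a comprehensive prominence winner, i.e., v*(t_x) ≥ v*(¬t_x) for the upper revised valuation v*, if and only if x minimizes v*(¬t_x), i.e., v*(¬t_x) ≤ v*(¬t_y) for all y ∈ I. -/
import Mathlib


/-- A valuation for prominence doctrines: degrees of belief for the literals
`t_x` ("x is prominent"), `¬t_x`, and `p_{xy}` ("x is preferable to y", for
distinct `x, y`), under the identification `¬p_{xy} = p_{yx}`. -/
structure PVal (I : Type*) where
  t : I → ℝ
  nt : I → ℝ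
  p : I → I → ℝ

/-- Max over a (possibly empty) index set of reals: the empty max is `0`
(note `Real.sSup_empty = 0`). -/
noncomputable def sup0 (S : Set ℝ) : ℝ := sSup S

open Classical in
/-- Min over a (possibly empty) index set of reals: the empty min is `1`. -/
noncomputable def inf1 (S : Set ℝ) : ℝ := if S.Nonempty then sInf S else 1

/-- The one-step revision operator associated with the comprehensive prominence
doctrine, whose clauses are indexed by (nonempty) subsets `X ⊆ I`:
`⋁_{r ∈ X} t_r ∨ ⋁_{r ∈ X, s ∉ X} p_{sr}`, `¬t_y ∨ ⋁_{r ∈ X, s ∉ X} p_{sr}`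
for `y ∉ X`, and `¬t_x ∨ ¬t_y`; the min over an empty index set is `1` and
the max over an empty index set is `0`. -/
noncomputable def Tcp {I : Type*} (v : PVal I) : PVal I where
  t := fun x => max (v.t x)
    (sup0 {a : ℝ | ∃ X : Finset I, x ∈ X ∧
      a = min (inf1 {b : ℝ | ∃ r ∈ X, r ≠ x ∧ b = v.nt r})
              (inf1 {b : ℝ | ∃ r ∈ X, ∃ s, s ∉ X ∧ b = v.p r s})})
  nt := fun y => max (v.nt y)
    (max (sup0 {a : ℝ | ∃ r, r ≠ y ∧ a = v.t r})
         (sup0 {a : ℝ | ∃ X : Finset I, X.Nonempty ∧ y ∉ X ∧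
           a = inf1 {b : ℝ | ∃ r ∈ X, ∃ s, s ∉ X ∧ b = v.p r s}}))
  p := fun u w => max (v.p u w)
    (sup0 {a : ℝ | ∃ X : Finset I, w ∈ X ∧ u ∉ X ∧
      a = min (max (inf1 {b : ℝ | ∃ r ∈ X, b = v.nt r})
                   (sup0 {b : ℝ | ∃ s, s ∉ X ∧ b = v.t s}))
              (inf1 {b : ℝ | ∃ r ∈ X, ∃ s, s ∉ X ∧ ¬(r = w ∧ s = u) ∧
                b = v.p r s})})

private lemma sup0_le {S : Set ℝ} {c : ℝ} (hc : 0 ≤ c) (h : ∀ a ∈ S, a ≤ c) :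
    sup0 S ≤ c := Real.sSup_le h hc

private lemma le_sup0 {S : Set ℝ} {a : ℝ} (hb : BddAbove S) (ha : a ∈ S) :
    a ≤ sup0 S := le_csSup hb ha

private lemma inf1_le_one {S : Set ℝ} (h : ∀ b ∈ S, b ≤ 1) : inf1 S ≤ 1 := by
  unfold inf1
  split_ifs with hS
  · obtain ⟨b, hb⟩ := hS
    by_cases hbd : BddBelow S
    · exact (csInf_le hbd hb).trans (h b hb)
    · rw [Real.sInf_of_not_bddBelow hbd]; norm_num
  · exact le_rfl

private lemma le_inf1 {S : Set ℝ} {c : ℝ} (hc : c ≤ 1) (h : ∀ b ∈ S, c ≤ b) :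
    c ≤ inf1 S := by
  unfold inf1
  split_ifs with hS
  · exact le_csInf hS h
  · exact hc

/-- The boundedness invariant preserved by `Tcp`. -/
private def Bnd {I : Type*} (w : PVal I) : Prop :=
  (∀ x, w.t x ≤ 1) ∧ (∀ x, w.nt x ≤ 1) ∧ ∀ x y : I, x ≠ y → w.p x y ≤ 1

private lemma bnd_step {I : Type*} {w : PVal I} (h : Bnd w) : Bnd (Tcp w) := by
  obtain ⟨h1, h2, h3⟩ := h
  refine ⟨fun x => ?_, fun y => ?_, fun u w' huw => ?_⟩
  · refine max_le (h1 x) (sup0_le zero_le_one ?_)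
    rintro a ⟨X, hxX, rfl⟩
    refine (min_le_left _ _).trans (inf1_le_one ?_)
    rintro b ⟨r, hr, hrx, rfl⟩
    exact h2 r
  · refine max_le (h2 y) (max_le (sup0_le zero_le_one ?_) (sup0_le zero_le_one ?_))
    · rintro a ⟨r, hr, rfl⟩
      exact h1 r
    · rintro a ⟨X, hX, hyX, rfl⟩
      refine inf1_le_one ?_
      rintro b ⟨r, hrX, s, hsX, rfl⟩
      exact h3 r s (fun hrs => hsX (hrs ▸ hrX))
  · refine max_le (h3 u w' huw) (sup0_le zero_le_one ?_)
    rintro a ⟨X, hwX, huX, rfl⟩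
    refine (min_le_left _ _).trans (max_le (inf1_le_one ?_) (sup0_le zero_le_one ?_))
    · rintro b ⟨r, hr, rfl⟩; exact h2 r
    · rintro b ⟨s, hs, rfl⟩; exact h1 s

/-- An option `x` is a comprehensive prominence winner (i.e. `t_x` is not
rejected by the upper revised valuation) iff it minimizes `v*(¬t_x)`. -/
theorem stmt15 {I : Type*} [Fintype I] [DecidableEq I]
    (hcard : 2 ≤ Fintype.card I)
    (v : PVal I)
    (hbox : ∀ x y : I, x ≠ y → v.p x y ∈ Set.Icc (0:ℝ) 1)
    (ht : ∀ x, v.t x = 0) (hnt : ∀ x, v.nt x = 0)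
    (vstar : PVal I) (hstar : ∃ N : ℕ, ∀ n ≥ N, Tcp^[n] v = vstar)
    (x : I) :
    vstar.nt x ≤ vstar.t x ↔ ∀ y : I, vstar.nt x ≤ vstar.nt y := by
  obtain ⟨N, hN⟩ := hstar
  -- `vstar` is a fixed point of `Tcp`.
  have h1 : Tcp^[N] v = vstar := hN N le_rfl
  have hfix : Tcp vstar = vstar := by
    have h2 := hN (N + 1) (Nat.le_succ N)
    rwa [Function.iterate_succ_apply', h1] at h2
  -- `vstar` satisfies the boundedness invariant.
  have hbnd : Bnd vstar := by
    rw [← h1]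
    clear h1 hfix hN
    induction N with
    | zero =>
      refine ⟨fun z => by simp [ht z], fun z => by simp [hnt z],
        fun a b hab => (hbox a b hab).2⟩
    | succ n ih => rw [Function.iterate_succ_apply']; exact bnd_step ih
  constructor
  · -- if `nt x ≤ t x` then `x` minimizes `nt`.
    intro hle y
    by_cases hxy : x = y
    · rw [hxy]
    · refine hle.trans ?_
      calc vstar.t x ≤ (Tcp vstar).nt y := by
            refine le_trans ?_ (le_max_of_le_right (le_max_left _ _))
            refine le_sup0 ?_ ⟨x, hxy, rfl⟩
            refine Set.Finite.bddAbove (Set.Finite.subset (Set.finite_range vstar.t) ?_)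
            rintro a ⟨r, hr, rfl⟩; exact ⟨r, rfl⟩
        _ = vstar.nt y := by rw [hfix]
  · -- if `x` minimizes `nt` then `nt x ≤ t x`.
    intro hmin
    have hnt1 : vstar.nt x ≤ 1 := hbnd.2.1 x
    calc vstar.nt x
        ≤ min (inf1 {b : ℝ | ∃ r ∈ (Finset.univ : Finset I), r ≠ x ∧ b = vstar.nt r})
              (inf1 {b : ℝ | ∃ r ∈ (Finset.univ : Finset I), ∃ s,
                 s ∉ (Finset.univ : Finset I) ∧ b = vstar.p r s}) := by
          refine le_min (le_inf1 hnt1 ?_) (le_inf1 hnt1 ?_)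
          · rintro b ⟨r, hr, hrx, rfl⟩; exact hmin r
          · rintro b ⟨r, hr, s, hs, rfl⟩
            exact absurd (Finset.mem_univ s) hs
      _ ≤ (Tcp vstar).t x := by
          refine le_trans ?_ (le_max_right _ _)
          refine le_sup0 ?_ ⟨Finset.univ, Finset.mem_univ x, rfl⟩
          refine Set.Finite.bddAbove (Set.Finite.subset
            (Set.finite_range (fun X : Finset I =>
              min (inf1 {b : ℝ | ∃ r ∈ X, r ≠ x ∧ b = vstar.nt r})
                  (inf1 {b : ℝ | ∃ r ∈ X, ∃ s, s ∉ X ∧ b = vstar.p r s}))) ?_)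
          rintro a ⟨X, hX, rfl⟩; exact ⟨X, rfl⟩
      _ = vstar.t x := by rw [hfix]
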